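/- Let k ≥ 1, let Σ⁽ⁱ⁾ ∈ ℝ^{d_i×d_i} be real symmetric matrices with ‖Σ⁽ⁱ⁾‖ ≤ C, and for each i let K⁽ⁱ⁾ be a real array on [d_i]⁴ with K⁽ⁱ⁾_{uvu'v'} = K⁽ⁱ⁾_{u'v'uv} and sup_{u,v} Σ_{u',v'} |K⁽ⁱ⁾_{uvu'v'}| ≤ κ₄, where κ₄ > 0. Write II⁽ⁱ⁾_{uvu'v'} = σ⁽ⁱ⁾_{uu'} σ⁽ⁱ⁾_{vv'}, III⁽ⁱ⁾_{uvu'v'} = σ⁽ⁱ⁾_{uv'} σ⁽ⁱ⁾_{u'v}, IV⁽ⁱ⁾_{uvu'v'} = K⁽ⁱ⁾_{uvu'v'}. Then for every real array B indexed by pairs of multi-indices in [d₁]×⋯×[d_k] with operator norm ‖B‖: Σ_{u,v,u',v'} ( ∏_{i=1}^{k} ( II⁽ⁱ⁾ + III⁽ⁱ⁾ + IV⁽ⁱ⁾ )_{u_i v_i u'_i v'_i} ) b_{uv} b_{u'v'} ≤ 2^k C^{2k} ‖B‖² (∏_i d_i)^{3/2} + (3^k − 2^k) κ₄^k ‖B‖²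 · max_{0 ≤ ℓ ≤ k−1} max_{1 ≤ i_1 < ⋯ < i_ℓ ≤ k} (C²/κ₄)^ℓ (∏_i d_i) ∏_{j=1}^ℓ d_{i_j}, where the outer sum runs over all multi-indices u, v, u', v' ∈ [d₁]×⋯×[d_k]. -/

import Mathlib

noncomputable def opNorm {I : Type*} [Fintype I] [DecidableEq I] (A : Matrix I I ℝ) : ℝ :=
  ‖LinearMap.toContinuousLinearMap (Matrix.toEuclideanLin A)‖

/-- `M` as a quadratic kernel has ℓ²→ℓ² operator norm at most `c`. -/
def OpBnd {P : Type*} [Fintype P] (M : P → P → ℝ) (c : ℝ) : Prop :=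
  0 ≤ c ∧ ∀ x : P → ℝ, (∑ p, (∑ q, M p q * x q) ^ 2) ≤ c ^ 2 * ∑ q, x q ^ 2

lemma opBnd_mono {P : Type*} [Fintype P] {M : P → P → ℝ} {c c' : ℝ}
    (h : OpBnd M c) (hcc : c ≤ c') : OpBnd M c' := by
  refine ⟨h.1.trans hcc, fun x => (h.2 x).trans ?_⟩
  have : c ^ 2 ≤ c' ^ 2 := by nlinarith [h.1]
  have hx : (0:ℝ) ≤ ∑ q, x q ^ 2 := Finset.sum_nonneg fun q _ => sq_nonneg _
  nlinarith

lemma opBnd_opNorm {I : Type*} [Fintype I] [DecidableEq I] (A : Matrix I I ℝ) :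
    OpBnd (fun p q => A p q) (opNorm A) := by
  refine ⟨norm_nonneg _, fun x => ?_⟩
  have key : ∀ v : EuclideanSpace ℝ I,
      ‖(LinearMap.toContinuousLinearMap (Matrix.toEuclideanLin A)) v‖ ≤ opNorm A * ‖v‖ :=
    fun v => (LinearMap.toContinuousLinearMap (Matrix.toEuclideanLin A)).le_opNorm v
  have h := key ((WithLp.equiv 2 (I → ℝ)).symm x)
  rw [LinearMap.coe_toContinuousLinearMap', Matrix.toEuclideanLin_apply] at h
  rw [EuclideanSpace.norm_eq, EuclideanSpace.norm_eq] at h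
  simp only [WithLp.equiv_symm_apply, PiLp.toLp_apply, WithLp.ofLp_toLp, Real.norm_eq_abs, sq_abs] at h
  have h1 : ∀ p : I, A.mulVec x p = ∑ q, A p q * x q := by
    intro p; rw [Matrix.mulVec, dotProduct]
  have h2 : √(∑ p, A.mulVec x p ^ 2) ≤ opNorm A * √(∑ q, x q ^ 2) := h
  have h3 : (0:ℝ) ≤ ∑ q, x q ^ 2 := Finset.sum_nonneg fun q _ => sq_nonneg _
  have h4 : (0:ℝ) ≤ ∑ p, A.mulVec x p ^ 2 := Finset.sum_nonneg fun q _ => sq_nonneg _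
  have h5 : (∑ p, A.mulVec x p ^ 2) ≤ (opNorm A * √(∑ q, x q ^ 2)) ^ 2 := by
    have := Real.sqrt_le_sqrt (le_of_eq (rfl : (∑ p, A.mulVec x p ^ 2) = _))
    nlinarith [Real.sq_sqrt h4, Real.sqrt_nonneg (∑ p, A.mulVec x p ^ 2), norm_nonneg
      (LinearMap.toContinuousLinearMap (Matrix.toEuclideanLin A)), Real.sqrt_nonneg (∑ q, x q ^ 2)]
  calc (∑ p, (∑ q, A p q * x q) ^ 2) = ∑ p, A.mulVec x p ^ 2 := by
        refine Finset.sum_congr rfl fun p _ => by rw [h1]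
    _ ≤ (opNorm A * √(∑ q, x q ^ 2)) ^ 2 := h5
    _ = opNorm A ^ 2 * ∑ q, x q ^ 2 := by
        rw [mul_pow, Real.sq_sqrt h3]

/-- column ℓ² bound from an operator bound -/
lemma col_sq_le {P : Type*} [Fintype P] [DecidableEq P] {M : P → P → ℝ} {c : ℝ}
    (h : OpBnd M c) (q₀ : P) : (∑ p, M p q₀ ^ 2) ≤ c ^ 2 := by
  have := h.2 (fun q => if q = q₀ then 1 else 0)
  simp only [mul_ite, mul_one, mul_zero, Finset.sum_ite_eq', Finset.mem_univ, if_true] at this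
  have h2 : (∑ q, (if q = q₀ then (1:ℝ) else 0) ^ 2) = 1 := by
    simp [ite_pow]
  rw [h2, mul_one] at this
  exact this

lemma opBnd_kron {P Q : Type*} [Fintype P] [Fintype Q] {M : P → P → ℝ} {N : Q → Q → ℝ}
    {a b : ℝ} (hM : OpBnd M a) (hN : OpBnd N b) :
    OpBnd (fun p q : P × Q => M p.1 q.1 * N p.2 q.2) (a * b) := by
  refine ⟨mul_nonneg hM.1 hN.1, fun x => ?_⟩
  have key : ∀ (p : P × Q), (∑ q : P × Q, M p.1 q.1 * N p.2 q.2 * x q)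
      = ∑ r₁ : P, M p.1 r₁ * (∑ r₂ : Q, N p.2 r₂ * x (r₁, r₂)) := by
    intro p
    rw [Fintype.sum_prod_type]
    refine Finset.sum_congr rfl fun r₁ _ => ?_
    rw [Finset.mul_sum]
    exact Finset.sum_congr rfl fun r₂ _ => by ring
  calc (∑ p : P × Q, (∑ q : P × Q, M p.1 q.1 * N p.2 q.2 * x q) ^ 2)
      = ∑ p₂ : Q, ∑ p₁ : P, (∑ r₁ : P, M p₁ r₁ * (∑ r₂ : Q, N p₂ r₂ * x (r₁, r₂))) ^ 2 := by
        rw [Fintype.sum_prod_type, Finset.sum_comm]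
        exact Finset.sum_congr rfl fun p₂ _ => Finset.sum_congr rfl fun p₁ _ => by rw [key (p₁, p₂)]
    _ ≤ ∑ p₂ : Q, a ^ 2 * ∑ r₁ : P, (∑ r₂ : Q, N p₂ r₂ * x (r₁, r₂)) ^ 2 := by
        refine Finset.sum_le_sum fun p₂ _ => hM.2 (fun r₁ => ∑ r₂ : Q, N p₂ r₂ * x (r₁, r₂))
    _ = a ^ 2 * ∑ r₁ : P, ∑ p₂ : Q, (∑ r₂ : Q, N p₂ r₂ * x (r₁, r₂)) ^ 2 := by
        rw [← Finset.mul_sum, Finset.sum_comm]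
    _ ≤ a ^ 2 * ∑ r₁ : P, (b ^ 2 * ∑ r₂ : Q, x (r₁, r₂) ^ 2) := by
        refine mul_le_mul_of_nonneg_left (Finset.sum_le_sum fun r₁ _ => hN.2 fun r₂ => x (r₁, r₂))
          (sq_nonneg a)
    _ = (a * b) ^ 2 * ∑ q : P × Q, x q ^ 2 := by
        rw [← Finset.mul_sum, Fintype.sum_prod_type]; ring

lemma opBnd_permCol {P : Type*} [Fintype P] {M : P → P → ℝ} {c : ℝ}
    (h : OpBnd M c) (e : P ≃ P) : OpBnd (fun p q => M p (e q)) c := by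
  refine ⟨h.1, fun x => ?_⟩
  have h1 : ∀ p, (∑ q, M p (e q) * x q) = ∑ q, M p q * x (e.symm q) := by
    intro p
    rw [← Equiv.sum_comp e (fun q => M p q * x (e.symm q))]
    simp
  have h2 : (∑ q, x (e.symm q) ^ 2) = ∑ q, x q ^ 2 := by
    rw [← Equiv.sum_comp e.symm (fun q => x q ^ 2)]
  calc (∑ p, (∑ q, M p (e q) * x q) ^ 2) = ∑ p, (∑ q, M p q * x (e.symm q)) ^ 2 := by
        exact Finset.sum_congr rfl fun p _ => by rw [h1]
    _ ≤ c ^ 2 * ∑ q, x (e.symm q) ^ 2 := h.2 _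
    _ = c ^ 2 * ∑ q, x q ^ 2 := by rw [h2]

/-- Schur test for symmetric kernels with ℓ¹ row bounds. -/
lemma opBnd_schur {P : Type*} [Fintype P] {M : P → P → ℝ} {c : ℝ} (hc : 0 ≤ c)
    (hsym : ∀ p q, M p q = M q p) (hrow : ∀ p, (∑ q, |M p q|) ≤ c) : OpBnd M c := by
  refine ⟨hc, fun x => ?_⟩
  have step1 : ∀ p, (∑ q, M p q * x q) ^ 2 ≤ (∑ q, |M p q|) * ∑ q, |M p q| * x q ^ 2 := by
    intro p
    have h1 : (∑ q, M p q * x q) ^ 2 ≤ (∑ q, |M p q| * |x q|) ^ 2 := by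
      have := Finset.abs_sum_le_sum_abs (fun q => M p q * x q) Finset.univ
      have h2 : (∑ q, |M p q * x q|) = ∑ q, |M p q| * |x q| := by
        exact Finset.sum_congr rfl fun q _ => abs_mul _ _
      nlinarith [abs_nonneg (∑ q, M p q * x q), sq_abs (∑ q, M p q * x q),
        Finset.sum_nonneg (fun q (_ : q ∈ Finset.univ) => abs_nonneg (M p q * x q))]
    have h3 : (∑ q, |M p q| * |x q|) ^ 2 ≤ (∑ q, (√(|M p q|)) ^ 2) * ∑ q, (√(|M p q|) * |x q|) ^ 2 := by
      have := Finset.sum_mul_sq_le_sq_mul_sq Finset.univ (fun q => √(|M p q|))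
        (fun q => √(|M p q|) * |x q|)
      calc (∑ q, |M p q| * |x q|) ^ 2
          = (∑ q, √(|M p q|) * (√(|M p q|) * |x q|)) ^ 2 := by
            congr 1
            refine Finset.sum_congr rfl fun q _ => ?_
            rw [← mul_assoc, Real.mul_self_sqrt (abs_nonneg _)]
        _ ≤ _ := this
    have h4 : (∑ q, (√(|M p q|)) ^ 2) = ∑ q, |M p q| := by
      exact Finset.sum_congr rfl fun q _ => Real.sq_sqrt (abs_nonneg _)
    have h5 : (∑ q, (√(|M p q|) * |x q|) ^ 2) = ∑ q, |M p q| * x q ^ 2 := by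
      refine Finset.sum_congr rfl fun q _ => ?_
      rw [mul_pow, Real.sq_sqrt (abs_nonneg _), sq_abs]
    rw [h4, h5] at h3
    exact h1.trans h3
  have step2 : (∑ p, (∑ q, M p q * x q) ^ 2) ≤ c * ∑ p, ∑ q, |M p q| * x q ^ 2 := by
    calc (∑ p, (∑ q, M p q * x q) ^ 2)
        ≤ ∑ p, (∑ q, |M p q|) * ∑ q, |M p q| * x q ^ 2 := Finset.sum_le_sum fun p _ => step1 p
      _ ≤ ∑ p, c * ∑ q, |M p q| * x q ^ 2 := by
          refine Finset.sum_le_sum fun p _ => mul_le_mul_of_nonneg_right (hrow p) ?_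
          exact Finset.sum_nonneg fun q _ => mul_nonneg (abs_nonneg _) (sq_nonneg _)
      _ = c * ∑ p, ∑ q, |M p q| * x q ^ 2 := by rw [Finset.mul_sum]
  have step3 : (∑ p, ∑ q, |M p q| * x q ^ 2) ≤ c * ∑ q, x q ^ 2 := by
    rw [Finset.sum_comm]
    calc (∑ q, ∑ p, |M p q| * x q ^ 2) = ∑ q, (∑ p, |M q p|) * x q ^ 2 := by
          refine Finset.sum_congr rfl fun q _ => ?_
          rw [← Finset.sum_mul]
          congr 1
          exact Finset.sum_congr rfl fun p _ => by rw [hsym]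
      _ ≤ ∑ q, c * x q ^ 2 := Finset.sum_le_sum fun q _ =>
          mul_le_mul_of_nonneg_right (hrow q) (sq_nonneg _)
      _ = c * ∑ q, x q ^ 2 := by rw [Finset.mul_sum]
  calc (∑ p, (∑ q, M p q * x q) ^ 2) ≤ c * (∑ p, ∑ q, |M p q| * x q ^ 2) := step2
    _ ≤ c * (c * ∑ q, x q ^ 2) := mul_le_mul_of_nonneg_left step3 hc
    _ = c ^ 2 * ∑ q, x q ^ 2 := by ring

lemma opBnd_tensor {ι : Type*} [Fintype ι] [DecidableEq ι]
    {α : ι → Type*} [∀ i, Fintype (α i)] [∀ i, DecidableEq (α i)]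
    (M : ∀ i, α i → α i → ℝ) (c : ι → ℝ)
    (h : ∀ i, OpBnd (M i) (c i)) :
    OpBnd (fun y z : ∀ i, α i => ∏ i, M i (y i) (z i)) (∏ i, c i) := by
  classical
  set St : Finset ι → (∀ i, α i) → (∀ i, α i) → ℝ := fun s y z =>
    ∏ i, if i ∈ s then M i (y i) (z i) else (if y i = z i then 1 else 0) with hSt
  -- basic facts about piSplitAt
  have key : ∀ (j : ι) (t : α j) (z' : ∀ i : {i // i ≠ j}, α i.1),
      ((Equiv.piSplitAt j α).symm (t, z')) j = t ∧
      (fun i : {i // i ≠ j} => ((Equiv.piSplitAt j α).symm (t, z')) i.1) = z' := by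
    intro j t z'
    have h1 : (Equiv.piSplitAt j α) ((Equiv.piSplitAt j α).symm (t, z')) = (t, z') :=
      (Equiv.piSplitAt j α).apply_symm_apply _
    rw [Equiv.piSplitAt_apply] at h1
    exact ⟨congrArg Prod.fst h1, congrArg Prod.snd h1⟩
  -- value of single-site kernel
  have Stj : ∀ (j : ι) (y : ∀ i, α i) (t : α j) (z' : ∀ i : {i // i ≠ j}, α i.1),
      St {j} y ((Equiv.piSplitAt j α).symm (t, z'))
        = if z' = (fun i : {i // i ≠ j} => y i.1) then M j (y j) t else 0 := by
    intro j y t z'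
    obtain ⟨hw1, hw2⟩ := key j t z'
    set w := (Equiv.piSplitAt j α).symm (t, z') with hw
    simp only [hSt]
    rw [Fintype.prod_eq_mul_prod_compl j]
    have e1 : (if j ∈ ({j} : Finset ι) then M j (y j) (w j) else (if y j = w j then 1 else 0))
        = M j (y j) t := by rw [if_pos (Finset.mem_singleton_self j), hw1]
    have e2 : (∏ i ∈ ({j} : Finset ι)ᶜ,
        if i ∈ ({j} : Finset ι) then M i (y i) (w i) else (if y i = w i then 1 else 0))
        = ∏ i ∈ ({j} : Finset ι)ᶜ, (if y i = w i then 1 else 0) := by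
      refine Finset.prod_congr rfl fun i hi => ?_
      rw [if_neg (Finset.mem_compl.mp hi)]
    rw [e1, e2, Finset.prod_boole]
    have e3 : (∀ i ∈ ({j} : Finset ι)ᶜ, y i = w i) ↔ z' = (fun i : {i // i ≠ j} => y i.1) := by
      constructor
      · intro hyw
        funext i
        rw [← hw2]
        exact (hyw i.1 (Finset.mem_compl.mpr (by simp [i.2]))).symm
      · intro hz i hi
        have hij : i ≠ j := by simpa using Finset.mem_compl.mp hi
        have := congrFun hz ⟨i, hij⟩
        have h2 := congrFun hw2 ⟨i, hij⟩
        simp only at this h2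
        exact (h2.trans this).symm
    by_cases hc : z' = fun i : {i // i ≠ j} => y i.1
    · rw [if_pos (e3.mpr hc), if_pos hc, mul_one]
    · rw [if_neg (fun hcon => hc (e3.mp hcon)), if_neg hc, mul_zero]
  -- single-site action on vectors
  have hact : ∀ (j : ι) (y : ∀ i, α i) (x : (∀ i, α i) → ℝ),
      (∑ z, St {j} y z * x z) = ∑ t : α j, M j (y j) t *
        x ((Equiv.piSplitAt j α).symm (t, fun i : {i // i ≠ j} => y i.1)) := by
    intro j y x
    rw [← Equiv.sum_comp (Equiv.piSplitAt j α).symm (fun z => St {j} y z * x z),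
      Fintype.sum_prod_type]
    refine Finset.sum_congr rfl fun t _ => ?_
    rw [Finset.sum_eq_single (fun i : {i // i ≠ j} => y i.1)]
    · rw [Stj, if_pos rfl]
    · intro z' _ hne
      rw [Stj, if_neg hne, zero_mul]
    · intro habs; exact absurd (Finset.mem_univ _) habs
  -- single-site operator bound
  have hj : ∀ j : ι, OpBnd (St {j}) (c j) := by
    intro j
    refine ⟨(h j).1, fun x => ?_⟩
    calc (∑ y, (∑ z, St {j} y z * x z) ^ 2)
        = ∑ y, (∑ t : α j, M j (y j) t *
            x ((Equiv.piSplitAt j α).symm (t, fun i : {i // i ≠ j} => y i.1))) ^ 2 :=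
          Finset.sum_congr rfl fun y _ => by rw [hact]
      _ = ∑ r : α j, ∑ y' : ∀ i : {i // i ≠ j}, α i.1,
            (∑ t : α j, M j r t * x ((Equiv.piSplitAt j α).symm (t, y'))) ^ 2 := by
          rw [← Equiv.sum_comp (Equiv.piSplitAt j α).symm
            (fun y => (∑ t : α j, M j (y j) t *
              x ((Equiv.piSplitAt j α).symm (t, fun i : {i // i ≠ j} => y i.1))) ^ 2),
            Fintype.sum_prod_type]
          refine Finset.sum_congr rfl fun r _ => Finset.sum_congr rfl fun y' _ => ?_
          obtain ⟨hw1, hw2⟩ := key j r y'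
          rw [hw1, hw2]
      _ = ∑ y' : ∀ i : {i // i ≠ j}, α i.1, ∑ r : α j,
            (∑ t : α j, M j r t * x ((Equiv.piSplitAt j α).symm (t, y'))) ^ 2 :=
          Finset.sum_comm
      _ ≤ ∑ y' : ∀ i : {i // i ≠ j}, α i.1,
            (c j) ^ 2 * ∑ t : α j, x ((Equiv.piSplitAt j α).symm (t, y')) ^ 2 :=
          Finset.sum_le_sum fun y' _ =>
            (h j).2 (fun t => x ((Equiv.piSplitAt j α).symm (t, y')))
      _ = (c j) ^ 2 * ∑ z, x z ^ 2 := by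
          rw [← Finset.mul_sum]
          congr 1
          rw [← Equiv.sum_comp (Equiv.piSplitAt j α).symm (fun z => x z ^ 2),
            Fintype.sum_prod_type, Finset.sum_comm]
  -- composition identity
  have comp : ∀ (j : ι) (s : Finset ι), j ∉ s → ∀ y z,
      St (insert j s) y z = ∑ w, St {j} y w * St s w z := by
    intro j s hjs y z
    rw [show (∑ w, St {j} y w * St s w z)
        = ∑ p : α j × (∀ i : {i // i ≠ j}, α i.1), St {j} y ((Equiv.piSplitAt j α).symm p) *
            St s ((Equiv.piSplitAt j α).symm p) z from
      (Equiv.sum_comp (Equiv.piSplitAt j α).symm (fun w => St {j} y w * St s w z)).symm,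
      Fintype.sum_prod_type]
    refine Eq.symm ?_
    have step1 : ∀ t : α j, (∑ w' : ∀ i : {i // i ≠ j}, α i.1,
        St {j} y ((Equiv.piSplitAt j α).symm (t, w')) *
          St s ((Equiv.piSplitAt j α).symm (t, w')) z)
        = M j (y j) t * St s ((Equiv.piSplitAt j α).symm (t, fun i : {i // i ≠ j} => y i.1)) z := by
      intro t
      rw [Finset.sum_eq_single (fun i : {i // i ≠ j} => y i.1)]
      · rw [Stj, if_pos rfl]
      · intro w' _ hne; rw [Stj, if_neg hne, zero_mul]
      · intro habs; exact absurd (Finset.mem_univ _) habs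
    have step2 : ∀ t : α j,
        St s ((Equiv.piSplitAt j α).symm (t, fun i : {i // i ≠ j} => y i.1)) z
        = (if t = z j then 1 else 0) *
          ∏ i ∈ ({j} : Finset ι)ᶜ, (if i ∈ s then M i (y i) (z i) else (if y i = z i then 1 else 0)) := by
      intro t
      obtain ⟨hw1, hw2⟩ := key j t (fun i : {i // i ≠ j} => y i.1)
      set w := (Equiv.piSplitAt j α).symm (t, fun i : {i // i ≠ j} => y i.1) with hwdef
      have hwi : ∀ (i : ι) (hi : i ≠ j), w i = y i := fun i hi => congrFun hw2 ⟨i, hi⟩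
      simp only [hSt]
      rw [Fintype.prod_eq_mul_prod_compl j]
      congr 1
      · rw [if_neg hjs, hw1]
      · refine Finset.prod_congr rfl fun i hi => ?_
        have hij : i ≠ j := by simpa using Finset.mem_compl.mp hi
        rw [hwi i hij]
    calc (∑ t : α j, ∑ w' : ∀ i : {i // i ≠ j}, α i.1,
          St {j} y ((Equiv.piSplitAt j α).symm (t, w')) *
            St s ((Equiv.piSplitAt j α).symm (t, w')) z)
        = ∑ t : α j, M j (y j) t * ((if t = z j then 1 else 0) *
            ∏ i ∈ ({j} : Finset ι)ᶜ,
              (if i ∈ s then M i (y i) (z i) else (if y i = z i then 1 else 0))) := by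
          refine Finset.sum_congr rfl fun t _ => ?_
          rw [step1 t, step2 t]
      _ = M j (y j) (z j) * ∏ i ∈ ({j} : Finset ι)ᶜ,
            (if i ∈ s then M i (y i) (z i) else (if y i = z i then 1 else 0)) := by
          rw [Finset.sum_eq_single (z j)]
          · rw [if_pos rfl, one_mul]
          · intro t _ hne; rw [if_neg hne, zero_mul, mul_zero]
          · intro habs; exact absurd (Finset.mem_univ _) habs
      _ = St (insert j s) y z := by
          simp only [hSt]
          rw [Fintype.prod_eq_mul_prod_compl j]
          congr 1
          · rw [if_pos (Finset.mem_insert_self j s)]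
          · refine Finset.prod_congr rfl fun i hi => ?_
            have hij : i ≠ j := by simpa using Finset.mem_compl.mp hi
            congr 1
            simp [Finset.mem_insert, hij]
  -- main induction
  have main : ∀ s : Finset ι, OpBnd (St s) (∏ i ∈ s, c i) := by
    intro s
    induction s using Finset.induction_on with
    | empty =>
        refine ⟨by rw [Finset.prod_empty]; exact zero_le_one, fun x => ?_⟩
        have hSte : ∀ y z, St ∅ y z = if y = z then 1 else 0 := by
          intro y z
          simp only [hSt, Finset.notMem_empty, if_false]
          rw [Finset.prod_boole]
          by_cases hyz : y = z
          · rw [if_pos hyz, if_pos (fun i _ => congrFun hyz i)]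
          · rw [if_neg hyz, if_neg (fun hcon => hyz (funext fun i => hcon i (Finset.mem_univ i)))]
        have : ∀ y, (∑ z, St ∅ y z * x z) = x y := by
          intro y
          rw [Finset.sum_eq_single y]
          · rw [hSte, if_pos rfl, one_mul]
          · intro z _ hne; rw [hSte, if_neg (Ne.symm hne), zero_mul]
          · intro habs; exact absurd (Finset.mem_univ _) habs
        calc (∑ y, (∑ z, St ∅ y z * x z) ^ 2) = ∑ y, x y ^ 2 :=
              Finset.sum_congr rfl fun y _ => by rw [this]
          _ ≤ (∏ i ∈ (∅ : Finset ι), c i) ^ 2 * ∑ q, x q ^ 2 := by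
              rw [Finset.prod_empty, one_pow, one_mul]
    | @insert j s hjs ih =>
        have hnn : 0 ≤ ∏ i ∈ s, c i := ih.1
        refine ⟨by rw [Finset.prod_insert hjs]; exact mul_nonneg (h j).1 hnn, fun x => ?_⟩
        have hrw : ∀ y, (∑ z, St (insert j s) y z * x z)
            = ∑ w, St {j} y w * (∑ z, St s w z * x z) := by
          intro y
          calc (∑ z, St (insert j s) y z * x z)
              = ∑ z, (∑ w, St {j} y w * St s w z) * x z :=
                Finset.sum_congr rfl fun z _ => by rw [comp j s hjs]
            _ = ∑ z, ∑ w, St {j} y w * St s w z * x z :=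
                Finset.sum_congr rfl fun z _ => Finset.sum_mul _ _ _
            _ = ∑ w, ∑ z, St {j} y w * St s w z * x z := Finset.sum_comm
            _ = ∑ w, St {j} y w * (∑ z, St s w z * x z) := by
                refine Finset.sum_congr rfl fun w _ => ?_
                rw [Finset.mul_sum]
                exact Finset.sum_congr rfl fun z _ => by ring
        calc (∑ y, (∑ z, St (insert j s) y z * x z) ^ 2)
            = ∑ y, (∑ w, St {j} y w * (∑ z, St s w z * x z)) ^ 2 :=
              Finset.sum_congr rfl fun y _ => by rw [hrw]
          _ ≤ (c j) ^ 2 * ∑ w, (∑ z, St s w z * x z) ^ 2 :=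
              (hj j).2 (fun w => ∑ z, St s w z * x z)
          _ ≤ (c j) ^ 2 * ((∏ i ∈ s, c i) ^ 2 * ∑ q, x q ^ 2) :=
              mul_le_mul_of_nonneg_left (ih.2 x) (sq_nonneg _)
          _ = (∏ i ∈ insert j s, c i) ^ 2 * ∑ q, x q ^ 2 := by
              rw [Finset.prod_insert hjs]; ring
  have huniv := main Finset.univ
  have : St Finset.univ = fun y z : ∀ i, α i => ∏ i, M i (y i) (z i) := by
    funext y z
    simp only [hSt]
    exact Finset.prod_congr rfl fun i _ => by rw [if_pos (Finset.mem_univ i)]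
  rwa [this] at huniv


lemma opBnd_bilinear {P : Type*} [Fintype P] {M : P → P → ℝ} {c : ℝ}
    (h : OpBnd M c) (x : P → ℝ) :
    (∑ p, ∑ q, M p q * x p * x q) ≤ c * ∑ p, x p ^ 2 := by
  have h1 : (∑ p, ∑ q, M p q * x p * x q) = ∑ p, x p * (∑ q, M p q * x q) := by
    refine Finset.sum_congr rfl fun p _ => ?_
    rw [Finset.mul_sum]
    exact Finset.sum_congr rfl fun q _ => by ring
  have h2 := Finset.sum_mul_sq_le_sq_mul_sq Finset.univ (fun p => x p)
    (fun p => ∑ q, M p q * x q)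
  have h3 := h.2 x
  have hx : (0:ℝ) ≤ ∑ p, x p ^ 2 := Finset.sum_nonneg fun q _ => sq_nonneg _
  set A := ∑ p, x p ^ 2 with hA
  set T := ∑ p, x p * (∑ q, M p q * x q) with hT
  rw [h1]
  have h4 : T ^ 2 ≤ (c * A) ^ 2 := by
    calc T ^ 2 ≤ A * ∑ p, (∑ q, M p q * x q) ^ 2 := h2
      _ ≤ A * (c ^ 2 * A) := mul_le_mul_of_nonneg_left h3 hx
      _ = (c * A) ^ 2 := by ring
  calc T ≤ √(T ^ 2) := by rw [Real.sqrt_sq_eq_abs]; exact le_abs_self T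
    _ ≤ √((c * A) ^ 2) := Real.sqrt_le_sqrt h4
    _ = c * A := Real.sqrt_sq (mul_nonneg h.1 hx)

/-- Splitting a pi type of pairs into a pair of pi types. -/
def pairSplit {k : ℕ} (d : Fin k → ℕ) :
    (∀ i, Fin (d i) × Fin (d i)) ≃ ((∀ i, Fin (d i)) × (∀ i, Fin (d i))) where
  toFun y := (fun i => (y i).1, fun i => (y i).2)
  invFun p := fun i => (p.1 i, p.2 i)
  left_inv y := rfl
  right_inv p := rfl

set_option maxHeartbeats 1000000 in
theorem stmt_12 (k : ℕ) (hk : 1 ≤ k) (d : Fin k → ℕ) (C κ₄ : ℝ) (hκ₄ : 0 < κ₄)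
    (S : ∀ i : Fin k, Matrix (Fin (d i)) (Fin (d i)) ℝ)
    (hsym : ∀ i, (S i).IsSymm) (hC : ∀ i, opNorm (S i) ≤ C)
    (K : ∀ i : Fin k, Fin (d i) → Fin (d i) → Fin (d i) → Fin (d i) → ℝ)
    (hKsym : ∀ i, ∀ u v u' v', K i u v u' v' = K i u' v' u v)
    (hK : ∀ i, ∀ u v, (∑ u', ∑ v', |K i u v u' v'|) ≤ κ₄)
    (B : Matrix (∀ i, Fin (d i)) (∀ i, Fin (d i)) ℝ) :
    (∑ u, ∑ v, ∑ u', ∑ v',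
        (∏ i : Fin k,
          (S i (u i) (u' i) * S i (v i) (v' i) + S i (u i) (v' i) * S i (u' i) (v i)
            + K i (u i) (v i) (u' i) (v' i))) * B u v * B u' v')
      ≤ 2 ^ k * C ^ (2 * k) * opNorm B ^ 2 * (∏ i, (d i : ℝ)) ^ ((3 : ℝ) / 2)
        + (3 ^ k - 2 ^ k) * κ₄ ^ k * opNorm B ^ 2 *
          (⨆ s : {s : Finset (Fin k) // s.card ≤ k - 1},
            (C ^ 2 / κ₄) ^ (s.1.card) * (∏ i, (d i : ℝ)) * ∏ i ∈ s.1, (d i : ℝ)) := by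
  classical
  haveI hne : Nonempty {s : Finset (Fin k) // s.card ≤ k - 1} := ⟨⟨∅, by simp⟩⟩
  have hC0 : 0 ≤ C := le_trans (norm_nonneg _) (hC ⟨0, hk⟩)
  by_cases hdeg : ∀ i, d i ≠ 0
  swap
  · -- degenerate case: some dᵢ = 0, everything vanishes
    push_neg at hdeg
    obtain ⟨i0, hi0⟩ := hdeg
    haveI hem : IsEmpty (∀ i, Fin (d i)) :=
      ⟨fun f => absurd (f i0).2 (by omega)⟩
    have hprod : (∏ i, (d i : ℝ)) = 0 :=
      Finset.prod_eq_zero (Finset.mem_univ i0) (by rw [hi0]; norm_num)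
    rw [Finset.univ_eq_empty, Finset.sum_empty, hprod,
      Real.zero_rpow (by norm_num : (3:ℝ)/2 ≠ 0)]
    simp [ciSup_const]
  · -- nondegenerate case
    have hd1 : ∀ i, 1 ≤ (d i : ℝ) := fun i => by
      exact_mod_cast Nat.one_le_iff_ne_zero.mpr (hdeg i)
    set nR := ∏ i, (d i : ℝ) with hnR
    have hnRnn : 0 ≤ nR := by
      rw [hnR]; exact Finset.prod_nonneg fun i _ => (d i).cast_nonneg
    have h1nR : (1:ℝ) ≤ nR := by
      rw [hnR]
      calc (1:ℝ) = ∏ _i : Fin k, (1:ℝ) := Finset.prod_const_one.symm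
        _ ≤ ∏ i, (d i : ℝ) :=
          Finset.prod_le_prod (fun i _ => zero_le_one) (fun i _ => hd1 i)
    set SUP := ⨆ s : {s : Finset (Fin k) // s.card ≤ k - 1},
        (C ^ 2 / κ₄) ^ (s.1.card) * nR * ∏ i ∈ s.1, (d i : ℝ) with hSUP
    set F : ∀ i : Fin k, Fin 3 → (Fin (d i) × Fin (d i)) → (Fin (d i) × Fin (d i)) → ℝ :=
      fun i j p q =>
        if j = 0 then S i p.1 q.1 * S i p.2 q.2
        else if j = 1 then S i p.1 q.2 * S i q.1 p.2
        else K i p.1 p.2 q.1 q.2 with hF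
    set cc : Fin 3 → ℝ := fun j => if j = 2 then κ₄ else C ^ 2 with hcc
    set A3 := Fintype.piFinset (fun _ : Fin k => (Finset.univ : Finset (Fin 3))) with hA3
    set W := ∑ p : ((∀ i, Fin (d i)) × (∀ i, Fin (d i))), B p.1 p.2 ^ 2 with hW
    -- site operator bounds
    have hsite : ∀ (i : Fin k) (j : Fin 3), OpBnd (F i j) (cc j) := by
      intro i j
      have hS : OpBnd (fun p q => S i p q) C := opBnd_mono (opBnd_opNorm (S i)) (hC i)
      by_cases hj0 : j = 0
      · subst hj0
        have hF0 : F i 0 = fun p q : Fin (d i) × Fin (d i) => S i p.1 q.1 * S i p.2 q.2 := by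
          funext p q; simp [hF]
        have hcc0 : cc 0 = C ^ 2 := by simp [hcc]
        rw [hF0, hcc0, sq]
        exact opBnd_kron hS hS
      by_cases hj1 : j = 1
      · subst hj1
        have hF1 : F i 1 = fun p q : Fin (d i) × Fin (d i) => S i p.1 q.2 * S i p.2 q.1 := by
          funext p q
          simp only [hF, show ((1:Fin 3) = 0) = False from by simp, if_false, if_pos rfl,
            eq_self_iff_true, if_true]
          rw [(hsym i).apply p.2 q.1]
        have hcc1 : cc 1 = C ^ 2 := by simp [hcc]
        rw [hF1, hcc1, sq]
        exact opBnd_permCol (opBnd_kron hS hS) (Equiv.prodComm _ _)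
      · have hj2 : j = 2 :=
          (by decide : ∀ jj : Fin 3, jj ≠ 0 → jj ≠ 1 → jj = 2) j hj0 hj1
        subst hj2
        have hFK : F i 2 = fun p q : Fin (d i) × Fin (d i) => K i p.1 p.2 q.1 q.2 := by
          funext p q
          simp [hF]
        have hcck : cc 2 = κ₄ := by simp [hcc]
        rw [hFK, hcck]
        refine opBnd_schur hκ₄.le (fun p q => hKsym i p.1 p.2 q.1 q.2) (fun p => ?_)
        rw [Fintype.sum_prod_type]
        exact hK i p.1 p.2
    -- expansion of the product
    have hexp : ∀ (u v u' v' : ∀ i, Fin (d i)),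
        (∏ i : Fin k, (S i (u i) (u' i) * S i (v i) (v' i) + S i (u i) (v' i) * S i (u' i) (v i)
            + K i (u i) (v i) (u' i) (v' i)))
        = ∑ a ∈ A3, ∏ i, F i (a i) (u i, v i) (u' i, v' i) := by
      intro u v u' v'
      rw [hA3, ← Finset.prod_univ_sum (fun _ => (Finset.univ : Finset (Fin 3)))
        (fun i j => F i j (u i, v i) (u' i, v' i))]
      refine Finset.prod_congr rfl fun i _ => ?_
      rw [Fin.sum_univ_three]
      simp only [hF]
      norm_num [show (1:Fin 3) ≠ 0 from by decide, show (2:Fin 3) ≠ 0 from by decide,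
        show (2:Fin 3) ≠ 1 from by decide]
    -- pull the sum over assignments outside
    have e4 : ∀ (f : ((∀ i, Fin (d i)) × (∀ i, Fin (d i))) →
        ((∀ i, Fin (d i)) × (∀ i, Fin (d i))) → ℝ),
        (∑ p, ∑ q, f p q) = ∑ u, ∑ v, ∑ u', ∑ v', f (u, v) (u', v') := by
      intro f
      rw [Fintype.sum_prod_type]
      exact Finset.sum_congr rfl fun u _ => Finset.sum_congr rfl fun v _ =>
        Fintype.sum_prod_type _
    set f0 : ((∀ i, Fin (d i)) × (∀ i, Fin (d i))) → ((∀ i, Fin (d i)) × (∀ i, Fin (d i))) → ℝ :=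
      fun p q => (∏ i : Fin k, (S i (p.1 i) (q.1 i) * S i (p.2 i) (q.2 i)
        + S i (p.1 i) (q.2 i) * S i (q.1 i) (p.2 i)
        + K i (p.1 i) (p.2 i) (q.1 i) (q.2 i))) * B p.1 p.2 * B q.1 q.2 with hf0
    set Φ : (Fin k → Fin 3) → ℝ := fun a =>
      ∑ p : ((∀ i, Fin (d i)) × (∀ i, Fin (d i))), ∑ q : ((∀ i, Fin (d i)) × (∀ i, Fin (d i))),
        (∏ i, F i (a i) (p.1 i, p.2 i) (q.1 i, q.2 i)) * B p.1 p.2 * B q.1 q.2 with hΦ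
    have hmain : (∑ u, ∑ v, ∑ u', ∑ v',
        (∏ i : Fin k,
          (S i (u i) (u' i) * S i (v i) (v' i) + S i (u i) (v' i) * S i (u' i) (v i)
            + K i (u i) (v i) (u' i) (v' i))) * B u v * B u' v')
        = ∑ a ∈ A3, Φ a := by
      calc (∑ u, ∑ v, ∑ u', ∑ v',
          (∏ i : Fin k,
            (S i (u i) (u' i) * S i (v i) (v' i) + S i (u i) (v' i) * S i (u' i) (v i)
              + K i (u i) (v i) (u' i) (v' i))) * B u v * B u' v')
          = ∑ u, ∑ v, ∑ u', ∑ v', f0 (u, v) (u', v') :=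
            Finset.sum_congr rfl fun u _ => Finset.sum_congr rfl fun v _ =>
              Finset.sum_congr rfl fun u' _ => Finset.sum_congr rfl fun v' _ => rfl
        _ = ∑ p : ((∀ i, Fin (d i)) × (∀ i, Fin (d i))),
              ∑ q : ((∀ i, Fin (d i)) × (∀ i, Fin (d i))), f0 p q := (e4 f0).symm
        _ = ∑ p : ((∀ i, Fin (d i)) × (∀ i, Fin (d i))),
              ∑ q : ((∀ i, Fin (d i)) × (∀ i, Fin (d i))), ∑ a ∈ A3,
              (∏ i, F i (a i) (p.1 i, p.2 i) (q.1 i, q.2 i)) * B p.1 p.2 * B q.1 q.2 := by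
            refine Finset.sum_congr rfl fun p _ => Finset.sum_congr rfl fun q _ => ?_
            simp only [hf0]
            rw [hexp p.1 p.2 q.1 q.2, Finset.sum_mul, Finset.sum_mul]
        _ = ∑ p : ((∀ i, Fin (d i)) × (∀ i, Fin (d i))), ∑ a ∈ A3,
              ∑ q : ((∀ i, Fin (d i)) × (∀ i, Fin (d i))),
              (∏ i, F i (a i) (p.1 i, p.2 i) (q.1 i, q.2 i)) * B p.1 p.2 * B q.1 q.2 :=
            Finset.sum_congr rfl fun p _ => Finset.sum_comm
        _ = ∑ a ∈ A3, Φ a := Finset.sum_comm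
    -- uniform bound for each assignment
    have hQ : ∀ a ∈ A3, Φ a ≤ (∏ i, cc (a i)) * W := by
      intro a _
      have hb := opBnd_bilinear
        (opBnd_tensor (fun i => F i (a i)) (fun i => cc (a i)) (fun i => hsite i (a i)))
        (fun y => B ((pairSplit d) y).1 ((pairSplit d) y).2)
      have hL : Φ a = ∑ y, ∑ z, (∏ i, F i (a i) (y i) (z i)) *
          B ((pairSplit d) y).1 ((pairSplit d) y).2 * B ((pairSplit d) z).1 ((pairSplit d) z).2 := by
        simp only [hΦ]
        rw [← Equiv.sum_comp (pairSplit d)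
          (fun p : ((∀ i, Fin (d i)) × (∀ i, Fin (d i))) =>
            ∑ q : ((∀ i, Fin (d i)) × (∀ i, Fin (d i))),
              (∏ i, F i (a i) (p.1 i, p.2 i) (q.1 i, q.2 i)) * B p.1 p.2 * B q.1 q.2)]
        refine Finset.sum_congr rfl fun y _ => ?_
        show (∑ q : ((∀ i, Fin (d i)) × (∀ i, Fin (d i))),
            (∏ i, F i (a i) (((pairSplit d) y).1 i, ((pairSplit d) y).2 i) (q.1 i, q.2 i)) *
              B ((pairSplit d) y).1 ((pairSplit d) y).2 * B q.1 q.2) = _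
        rw [← Equiv.sum_comp (pairSplit d)
          (fun q : ((∀ i, Fin (d i)) × (∀ i, Fin (d i))) =>
            (∏ i, F i (a i) (((pairSplit d) y).1 i, ((pairSplit d) y).2 i) (q.1 i, q.2 i)) *
              B ((pairSplit d) y).1 ((pairSplit d) y).2 * B q.1 q.2)]
        exact Finset.sum_congr rfl fun z _ => rfl
      have hR : (∑ y, (B ((pairSplit d) y).1 ((pairSplit d) y).2) ^ 2) = W := by
        rw [hW]
        exact Equiv.sum_comp (pairSplit d)
          (fun p : ((∀ i, Fin (d i)) × (∀ i, Fin (d i))) => B p.1 p.2 ^ 2)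
      rw [hL, ← hR]
      exact hb
    -- bound on the Frobenius norm
    have hWnn : 0 ≤ W := Finset.sum_nonneg fun p _ => sq_nonneg _
    have hWle : W ≤ opNorm B ^ 2 * nR := by
      have hcard : ((Fintype.card (∀ i, Fin (d i)) : ℕ) : ℝ) = nR := by
        rw [Fintype.card_pi]
        push_cast
        exact Finset.prod_congr rfl fun i _ => by rw [Fintype.card_fin]
      calc W = ∑ v, ∑ u, B u v ^ 2 := by
            rw [hW, Fintype.sum_prod_type]; exact Finset.sum_comm
        _ ≤ ∑ _v : (∀ i, Fin (d i)), opNorm B ^ 2 :=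
            Finset.sum_le_sum fun v _ => col_sq_le (opBnd_opNorm B) v
        _ = ((Fintype.card (∀ i, Fin (d i)) : ℕ) : ℝ) * opNorm B ^ 2 := by
            rw [Finset.sum_const, Finset.card_univ, nsmul_eq_mul]
        _ = opNorm B ^ 2 * nR := by rw [hcard]; ring
    -- sup facts
    have hbdd : BddAbove (Set.range fun s : {s : Finset (Fin k) // s.card ≤ k - 1} =>
        (C ^ 2 / κ₄) ^ (s.1.card) * nR * ∏ i ∈ s.1, (d i : ℝ)) :=
      Set.Finite.bddAbove (Set.finite_range _)
    have hsup_ge : ∀ s0 : {s : Finset (Fin k) // s.card ≤ k - 1},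
        (C ^ 2 / κ₄) ^ (s0.1.card) * nR * ∏ i ∈ s0.1, (d i : ℝ) ≤ SUP :=
      fun s0 => le_ciSup hbdd s0
    have hsup_nn : 0 ≤ SUP := by
      have h0 := hsup_ge ⟨∅, Nat.zero_le _⟩
      simp only [Finset.card_empty, pow_zero, one_mul, Finset.prod_empty, mul_one] at h0
      exact hnRnn.trans h0
    -- cardinalities
    have hfilter_eq : A3.filter (fun a => ∀ i, a i ≠ 2)
        = Fintype.piFinset (fun _ : Fin k => ({0,1} : Finset (Fin 3))) := by
      ext a
      simp only [Finset.mem_filter, hA3, Fintype.mem_piFinset, Finset.mem_univ, true_and,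
        forall_true_iff, true_and, and_true, forall_const]
      constructor
      · exact fun h i => (by decide : ∀ j : Fin 3, j ≠ 2 → j ∈ ({0,1} : Finset (Fin 3))) _ (h i)
      · exact fun h i => (by decide : ∀ j : Fin 3, j ∈ ({0,1} : Finset (Fin 3)) → j ≠ 2) _ (h i)
    have hcard2 : (A3.filter (fun a => ∀ i, a i ≠ 2)).card = 2 ^ k := by
      rw [hfilter_eq, Fintype.card_piFinset]
      rw [show (({0,1} : Finset (Fin 3))).card = 2 from by decide]
      rw [Finset.prod_const, Finset.card_univ, Fintype.card_fin]
    have hcardA3 : A3.card = 3 ^ k := by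
      rw [hA3, Fintype.card_piFinset]
      rw [show ((Finset.univ : Finset (Fin 3))).card = 3 from by decide]
      rw [Finset.prod_const, Finset.card_univ, Fintype.card_fin]
    have hcard3 : (A3.filter (fun a => ¬∀ i, a i ≠ 2)).card = 3 ^ k - 2 ^ k := by
      have h5 := Finset.card_filter_add_card_filter_not
        (s := A3) (p := fun a => ∀ i, a i ≠ 2)
      rw [hcard2, hcardA3] at h5
      exact Nat.eq_sub_of_add_eq' h5
    -- the pure part
    have hrpow : nR ≤ nR ^ ((3:ℝ)/2) := by
      calc nR = nR ^ ((1:ℝ)) := (Real.rpow_one _).symm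
        _ ≤ nR ^ ((3:ℝ)/2) := Real.rpow_le_rpow_of_exponent_le h1nR (by norm_num)
    have hpure : (∑ a ∈ A3.filter (fun a => ∀ i, a i ≠ 2), Φ a)
        ≤ 2 ^ k * C ^ (2 * k) * opNorm B ^ 2 * nR ^ ((3:ℝ)/2) := by
      have hone : ∀ a ∈ A3.filter (fun a => ∀ i, a i ≠ 2), Φ a ≤ C ^ (2 * k) * W := by
        intro a ha
        obtain ⟨haA, hpa⟩ := Finset.mem_filter.mp ha
        have hpc : (∏ i, cc (a i)) = C ^ (2 * k) := by
          have hval : ∀ i ∈ Finset.univ, cc (a i) = C ^ 2 := fun i _ => by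
            simp only [hcc]; rw [if_neg (hpa i)]
          rw [Finset.prod_congr rfl hval, Finset.prod_const, Finset.card_univ,
            Fintype.card_fin, pow_mul]
        rw [← hpc]
        exact hQ a haA
      have hC2k : (0:ℝ) ≤ C ^ (2 * k) := pow_nonneg hC0 _
      calc (∑ a ∈ A3.filter (fun a => ∀ i, a i ≠ 2), Φ a)
          ≤ ∑ _a ∈ A3.filter (fun a => ∀ i, a i ≠ 2), C ^ (2 * k) * W :=
            Finset.sum_le_sum hone
        _ = ((2:ℝ) ^ k) * (C ^ (2 * k) * W) := by
            rw [Finset.sum_const, hcard2, nsmul_eq_mul]; push_cast; ring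
        _ ≤ ((2:ℝ) ^ k) * (C ^ (2 * k) * (opNorm B ^ 2 * nR ^ ((3:ℝ)/2))) := by
            refine mul_le_mul_of_nonneg_left (mul_le_mul_of_nonneg_left ?_ hC2k)
              (by positivity)
            exact hWle.trans (mul_le_mul_of_nonneg_left hrpow (sq_nonneg _))
        _ = 2 ^ k * C ^ (2 * k) * opNorm B ^ 2 * nR ^ ((3:ℝ)/2) := by ring
    -- the mixed part
    have hmixed : (∑ a ∈ A3.filter (fun a => ¬∀ i, a i ≠ 2), Φ a)
        ≤ (3 ^ k - 2 ^ k) * κ₄ ^ k * opNorm B ^ 2 * SUP := by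
      have hper : ∀ a ∈ A3.filter (fun a => ¬∀ i, a i ≠ 2),
          Φ a ≤ κ₄ ^ k * opNorm B ^ 2 * SUP := by
        intro a ha
        obtain ⟨haA, hnpa⟩ := Finset.mem_filter.mp ha
        have hex : ∃ i, a i = 2 := by push_neg at hnpa; exact hnpa
        obtain ⟨i0, hi0⟩ := hex
        set s0 := Finset.univ.filter (fun i : Fin k => a i ≠ 2) with hs0
        have hs0k : s0.card + (Finset.univ.filter (fun i : Fin k => ¬ a i ≠ 2)).card = k := by
          have := Finset.card_filter_add_card_filter_not
            (s := (Finset.univ : Finset (Fin k))) (p := fun i : Fin k => a i ≠ 2)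
          rwa [Finset.card_univ, Fintype.card_fin] at this
        have hs0lt : s0.card < k := by
          have hss : s0 ⊂ Finset.univ := by
            rw [Finset.ssubset_univ_iff]
            intro hcon
            have hmem : i0 ∈ s0 := hcon ▸ Finset.mem_univ i0
            exact (Finset.mem_filter.mp hmem).2 hi0
          have := Finset.card_lt_card hss
          rwa [Finset.card_univ, Fintype.card_fin] at this
        have hs0card : s0.card ≤ k - 1 := Nat.le_pred_of_lt hs0lt
        have hs0le : s0.card ≤ k := hs0lt.le
        have hpc : (∏ i, cc (a i)) = (C ^ 2) ^ s0.card * κ₄ ^ (k - s0.card) := by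
          rw [← Finset.prod_filter_mul_prod_filter_not Finset.univ
            (fun i : Fin k => a i ≠ 2) (fun i => cc (a i))]
          have hv1 : ∀ i ∈ s0, cc (a i) = C ^ 2 := fun i hi => by
            simp only [hcc]; rw [if_neg (Finset.mem_filter.mp hi).2]
          have hv2 : ∀ i ∈ Finset.univ.filter (fun i : Fin k => ¬ a i ≠ 2),
              cc (a i) = κ₄ := fun i hi => by
            simp only [hcc]; rw [if_pos (not_not.mp (Finset.mem_filter.mp hi).2)]
          rw [Finset.prod_congr rfl hv1, Finset.prod_congr rfl hv2,
            Finset.prod_const, Finset.prod_const]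
          exact congrArg (fun m => (C ^ 2) ^ s0.card * κ₄ ^ m) (Nat.eq_sub_of_add_eq' hs0k)
        have halg : κ₄ ^ k * (C ^ 2 / κ₄) ^ s0.card = (C ^ 2) ^ s0.card * κ₄ ^ (k - s0.card) := by
          have e : κ₄ ^ k = κ₄ ^ (k - s0.card) * κ₄ ^ s0.card := by
            rw [← pow_add, Nat.sub_add_cancel hs0le]
          rw [e, div_pow]
          have hne' : κ₄ ^ s0.card ≠ 0 := pow_ne_zero _ hκ₄.ne'
          field_simp
        have hprod1 : (1:ℝ) ≤ ∏ i ∈ s0, (d i : ℝ) := by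
          calc (1:ℝ) = ∏ _i ∈ s0, (1:ℝ) := Finset.prod_const_one.symm
            _ ≤ ∏ i ∈ s0, (d i : ℝ) :=
              Finset.prod_le_prod (fun i _ => zero_le_one) (fun i _ => hd1 i)
        have hsupge := hsup_ge ⟨s0, hs0card⟩
        have hfac : (0:ℝ) ≤ (C ^ 2 / κ₄) ^ s0.card * nR :=
          mul_nonneg (pow_nonneg (div_nonneg (sq_nonneg _) hκ₄.le) _) hnRnn
        have hfac2 : (0:ℝ) ≤ κ₄ ^ k * opNorm B ^ 2 :=
          mul_nonneg (pow_nonneg hκ₄.le _) (sq_nonneg _)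
        calc Φ a ≤ (∏ i, cc (a i)) * W := hQ a haA
          _ = ((C ^ 2) ^ s0.card * κ₄ ^ (k - s0.card)) * W := by rw [hpc]
          _ ≤ ((C ^ 2) ^ s0.card * κ₄ ^ (k - s0.card)) * (opNorm B ^ 2 * nR) := by
              refine mul_le_mul_of_nonneg_left hWle ?_
              exact mul_nonneg (pow_nonneg (sq_nonneg _) _) (pow_nonneg hκ₄.le _)
          _ = κ₄ ^ k * opNorm B ^ 2 * ((C ^ 2 / κ₄) ^ s0.card * nR * 1) := by
              rw [← halg]; ring
          _ ≤ κ₄ ^ k * opNorm B ^ 2 * ((C ^ 2 / κ₄) ^ s0.card * nR * ∏ i ∈ s0, (d i : ℝ)) := by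
              refine mul_le_mul_of_nonneg_left ?_ hfac2
              exact mul_le_mul_of_nonneg_left hprod1 hfac
          _ ≤ κ₄ ^ k * opNorm B ^ 2 * SUP := mul_le_mul_of_nonneg_left hsupge hfac2
      have hcst : (0:ℝ) ≤ κ₄ ^ k * opNorm B ^ 2 * SUP :=
        mul_nonneg (mul_nonneg (pow_nonneg hκ₄.le _) (sq_nonneg _)) hsup_nn
      have hcast : ((3 ^ k - 2 ^ k : ℕ) : ℝ) = 3 ^ k - 2 ^ k := by
        have h23 : 2 ^ k ≤ 3 ^ k := Nat.pow_le_pow_left (by norm_num) k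
        push_cast [Nat.cast_sub h23]
        ring
      calc (∑ a ∈ A3.filter (fun a => ¬∀ i, a i ≠ 2), Φ a)
          ≤ ∑ _a ∈ A3.filter (fun a => ¬∀ i, a i ≠ 2), κ₄ ^ k * opNorm B ^ 2 * SUP :=
            Finset.sum_le_sum hper
        _ = ((3 ^ k - 2 ^ k : ℕ) : ℝ) * (κ₄ ^ k * opNorm B ^ 2 * SUP) := by
            rw [Finset.sum_const, hcard3, nsmul_eq_mul]
        _ = (3 ^ k - 2 ^ k) * κ₄ ^ k * opNorm B ^ 2 * SUP := by rw [hcast]; ring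
    rw [hmain, ← Finset.sum_filter_add_sum_filter_not A3 (fun a => ∀ i, a i ≠ 2)]
    exact add_le_add hpure hmixed
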